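/- Let w preserve B (signature (n−1,1)) and suppose w has an eigenvector p ∈ Q̂ with eigenvalue λ and an eigenvector p' ∈ Q̂ with eigenvalue λ', p̂ ≠ p̂', and |λ| < 1. If (w^{nᵢ}·x) is a subsequence of normalized iterates converging to some y ∈ Q̂, then ||w^{nᵢ}(x)|₁| → ∞ and |B(w^{nᵢ}·x, p')| → 0, so y = p' (the eigenvector with eigenvalue λ' = 1/λ of modulus > 1). -/

import Mathlib

open Matrix

lemma quadform_eq {n : ℕ} {B : Matrix (Fin n) (Fin n) ℝ} (hB : B.IsHermitian)
    (z z' : Fin n → ℝ) :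
    z ⬝ᵥ B.mulVec z' = ∑ j, hB.eigenvalues j *
      (((star (hB.eigenvectorUnitary : Matrix (Fin n) (Fin n) ℝ)) *ᵥ z) j *
       ((star (hB.eigenvectorUnitary : Matrix (Fin n) (Fin n) ℝ)) *ᵥ z') j) := by
  set U := (hB.eigenvectorUnitary : Matrix (Fin n) (Fin n) ℝ) with hU
  have hUT : Uᵀ = star U := by
    ext i j; simp [Matrix.star_eq_conjTranspose, conjTranspose_apply]
  conv_lhs => rw [hB.spectral_theorem, Unitary.conjStarAlgAut_apply, ← hU, ← mulVec_mulVec, ← mulVec_mulVec,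
    dotProduct_mulVec, ← mulVec_transpose, hUT]
  simp only [dotProduct, mulVec_diagonal, Function.comp_apply, RCLike.ofReal_real_eq_id, id_eq]
  exact Finset.sum_congr rfl fun j _ => by ring

lemma unitary_dot {n : ℕ} (U : Matrix.unitaryGroup (Fin n) ℝ) (z o : Fin n → ℝ) :
    ((star (U : Matrix (Fin n) (Fin n) ℝ)) *ᵥ z) ⬝ᵥ ((star (U : Matrix (Fin n) (Fin n) ℝ)) *ᵥ o) = z ⬝ᵥ o := by
  rw [dotProduct_mulVec, vecMul_mulVec, ← dotProduct_mulVec]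
  have h2 : (star (U : Matrix (Fin n) (Fin n) ℝ))ᵀ = (U : Matrix (Fin n) (Fin n) ℝ) := by
    ext i j; simp [Matrix.star_eq_conjTranspose, conjTranspose_apply]
  rw [h2, Unitary.mul_star_self_of_mem U.2, one_mulVec]

lemma posdef_perp {n : ℕ} {B : Matrix (Fin n) (Fin n) ℝ} (hB : B.IsHermitian)
    (hneg : (Finset.univ.filter (fun i => hB.eigenvalues i < 0)).card = 1)
    (hpos : (Finset.univ.filter (fun i => 0 < hB.eigenvalues i)).card = n - 1)
    (o : Fin n → ℝ) (μ : ℝ) (hμ : μ < 0) (ho : B.mulVec o = μ • o)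
    (honorm : o ⬝ᵥ o = 1) :
    ∀ z : Fin n → ℝ, z ⬝ᵥ o = 0 → z ≠ 0 → 0 < z ⬝ᵥ B.mulVec z := by
  intro z hzo hz
  set U := hB.eigenvectorUnitary with hU
  set uo := (star (U : Matrix (Fin n) (Fin n) ℝ)) *ᵥ o with huo
  set uz := (star (U : Matrix (Fin n) (Fin n) ℝ)) *ᵥ z with huz
  have hUstar : (U : Matrix (Fin n) (Fin n) ℝ) * star (U : Matrix (Fin n) (Fin n) ℝ) = 1 :=
    Unitary.mul_star_self_of_mem U.2
  have hstarU : star (U : Matrix (Fin n) (Fin n) ℝ) * (U : Matrix (Fin n) (Fin n) ℝ) = 1 :=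
    Unitary.star_mul_self_of_mem U.2
  -- unique negative index
  obtain ⟨i0, hi0⟩ := Finset.card_eq_one.mp hneg
  have hi0neg : hB.eigenvalues i0 < 0 := by
    have : i0 ∈ Finset.univ.filter (fun i => hB.eigenvalues i < 0) := hi0 ▸ Finset.mem_singleton_self i0
    exact (Finset.mem_filter.mp this).2
  have hposall : ∀ j, j ≠ i0 → 0 < hB.eigenvalues j := by
    intro j hj
    by_contra hcon
    push_neg at hcon
    rcases lt_or_eq_of_le hcon with h | h
    · have : j ∈ Finset.univ.filter (fun i => hB.eigenvalues i < 0) := by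
        simp [h]
      rw [hi0] at this
      exact hj (Finset.mem_singleton.mp this)
    · -- eigenvalue zero: contradiction with cards
      have hdisj : Disjoint (Finset.univ.filter (fun i => hB.eigenvalues i < 0))
          (Finset.univ.filter (fun i => 0 < hB.eigenvalues i)) := by
        rw [Finset.disjoint_left]
        intro a ha hb
        simp only [Finset.mem_filter] at ha hb
        exact absurd (ha.2.trans hb.2) (lt_irrefl _)
      have hcard : ((Finset.univ.filter (fun i => hB.eigenvalues i < 0)) ∪
          (Finset.univ.filter (fun i => 0 < hB.eigenvalues i))).card = n := by
        rw [Finset.card_union_of_disjoint hdisj, hneg, hpos]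
        have hn : 1 ≤ n := by
          by_contra hn
          push_neg at hn
          interval_cases n
          · simp at hneg
        omega
      have huniv : ((Finset.univ.filter (fun i => hB.eigenvalues i < 0)) ∪
          (Finset.univ.filter (fun i => 0 < hB.eigenvalues i))) = Finset.univ := by
        apply Finset.eq_univ_of_card
        rw [hcard, Fintype.card_fin]
      have : j ∈ ((Finset.univ.filter (fun i => hB.eigenvalues i < 0)) ∪
          (Finset.univ.filter (fun i => 0 < hB.eigenvalues i))) := by
        rw [huniv]; exact Finset.mem_univ j
      rcases Finset.mem_union.mp this with hmem | hmem
      · rw [hi0] at hmem; exact hj (Finset.mem_singleton.mp hmem)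
      · have := (Finset.mem_filter.mp hmem).2
        rw [← h] at this; exact lt_irrefl _ this
  -- eigen equation for uo
  have hDuo : ∀ j, hB.eigenvalues j * uo j = μ * uo j := by
    intro j
    have h1 : (diagonal (RCLike.ofReal ∘ hB.eigenvalues) : Matrix (Fin n) (Fin n) ℝ) *ᵥ uo = μ • uo := by
      have h2 : B *ᵥ o = (U : Matrix (Fin n) (Fin n) ℝ) *ᵥ ((diagonal (RCLike.ofReal ∘ hB.eigenvalues)) *ᵥ uo) := by
        conv_lhs => rw [hB.spectral_theorem, ← hU]
        rw [Unitary.conjStarAlgAut_apply, ← mulVec_mulVec, ← mulVec_mulVec]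
      have h3 : (star (U : Matrix (Fin n) (Fin n) ℝ)) *ᵥ ((U : Matrix (Fin n) (Fin n) ℝ) *ᵥ ((diagonal (RCLike.ofReal ∘ hB.eigenvalues)) *ᵥ uo))
          = (star (U : Matrix (Fin n) (Fin n) ℝ)) *ᵥ (μ • o) := by
        rw [← h2, ho]
      rw [mulVec_mulVec, hstarU, one_mulVec, mulVec_smul, ← huo] at h3
      exact h3
    have := congrFun h1 j
    simpa [mulVec_diagonal] using this
  have huo_zero : ∀ j, j ≠ i0 → uo j = 0 := by
    intro j hj
    have h := hDuo j
    have hne : hB.eigenvalues j ≠ μ := by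
      have := hposall j hj; linarith
    by_contra hc
    exact hne (mul_right_cancel₀ hc h)
  have huo_i0 : uo i0 ≠ 0 := by
    intro hc
    have huo0 : uo = 0 := by
      funext j
      by_cases hj : j = i0
      · rw [hj]; exact hc
      · exact huo_zero j hj
    have hoz : o = 0 := by
      have := congrArg (fun v => (U : Matrix (Fin n) (Fin n) ℝ) *ᵥ v) huo0
      simp only [huo, mulVec_mulVec, hUstar, one_mulVec, mulVec_zero] at this
      exact this
    rw [hoz] at honorm
    simp at honorm
  have huz_i0 : uz i0 = 0 := by
    have hdot : uz ⬝ᵥ uo = 0 := by rw [huz, huo, unitary_dot]; exact hzo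
    rw [dotProduct] at hdot
    rw [Finset.sum_eq_single i0 (fun j _ hj => by rw [huo_zero j hj, mul_zero])
      (fun h => absurd (Finset.mem_univ i0) h)] at hdot
    exact (mul_eq_zero.mp hdot).resolve_right huo_i0
  have huz_ne : ∃ j, uz j ≠ 0 := by
    by_contra hc
    push_neg at hc
    have huz0 : uz = 0 := funext hc
    have : z = 0 := by
      have := congrArg (fun v => (U : Matrix (Fin n) (Fin n) ℝ) *ᵥ v) huz0
      simp only [huz, mulVec_mulVec, hUstar, one_mulVec, mulVec_zero] at this
      exact this
    exact hz this
  obtain ⟨j0, hj0⟩ := huz_ne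
  have hj0i0 : j0 ≠ i0 := fun h => hj0 (h ▸ huz_i0)
  have key : z ⬝ᵥ B.mulVec z = ∑ j, hB.eigenvalues j * (uz j * uz j) := by
    rw [huz, hU]; exact quadform_eq hB z z
  rw [key]
  apply Finset.sum_pos'
  · intro j _
    by_cases hj : j = i0
    · rw [hj, huz_i0]; simp
    · exact mul_nonneg (le_of_lt (hposall j hj)) (mul_self_nonneg _)
  · exact ⟨j0, Finset.mem_univ j0, mul_pos (hposall j0 hj0i0) (mul_self_pos.mpr hj0)⟩

lemma symmB {n : ℕ} {B : Matrix (Fin n) (Fin n) ℝ} (hB : B.IsHermitian) (u v : Fin n → ℝ) :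
    u ⬝ᵥ B.mulVec v = v ⬝ᵥ B.mulVec u := by
  simp only [dotProduct, mulVec, Finset.mul_sum]
  rw [Finset.sum_comm]
  refine Finset.sum_congr rfl fun j _ => Finset.sum_congr rfl fun i _ => ?_
  have h := hB.apply j i
  simp only [RCLike.star_def, starRingEnd_apply, star_trivial] at h
  rw [h]; ring

lemma iso_eq {n : ℕ} {B : Matrix (Fin n) (Fin n) ℝ} (hB : B.IsHermitian)
    (hneg : (Finset.univ.filter (fun i => hB.eigenvalues i < 0)).card = 1)
    (hpos : (Finset.univ.filter (fun i => 0 < hB.eigenvalues i)).card = n - 1)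
    (o : Fin n → ℝ) (μ : ℝ) (hμ : μ < 0) (ho : B.mulVec o = μ • o)
    (honorm : o ⬝ᵥ o = 1) (u v : Fin n → ℝ)
    (huQ : u ⬝ᵥ B.mulVec u = 0) (hu1 : u ⬝ᵥ o = 1)
    (hvQ : v ⬝ᵥ B.mulVec v = 0) (hv1 : v ⬝ᵥ o = 1)
    (huv : u ⬝ᵥ B.mulVec v = 0) : u = v := by
  by_contra hne
  have hd : u - v ≠ 0 := sub_ne_zero.mpr hne
  have hdo : (u - v) ⬝ᵥ o = 0 := by rw [sub_dotProduct, hu1, hv1, sub_self]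
  have hvu : v ⬝ᵥ B.mulVec u = 0 := by rw [symmB hB]; exact huv
  have hBd : (u - v) ⬝ᵥ B.mulVec (u - v) = 0 := by
    rw [sub_dotProduct, mulVec_sub, dotProduct_sub, dotProduct_sub, huQ, hvQ, huv, hvu]
    ring
  have := posdef_perp hB hneg hpos o μ hμ ho honorm (u - v) hdo hd
  rw [hBd] at this
  exact lt_irrefl _ this

lemma pow_inv_B {n : ℕ} {B : Matrix (Fin n) (Fin n) ℝ}
    (w : (Fin n → ℝ) →ₗ[ℝ] (Fin n → ℝ))
    (hw : ∀ u v : Fin n → ℝ, (w u) ⬝ᵥ B.mulVec (w v) = u ⬝ᵥ B.mulVec v)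
    (k : ℕ) (u v : Fin n → ℝ) :
    ((w ^ k) u) ⬝ᵥ B.mulVec ((w ^ k) v) = u ⬝ᵥ B.mulVec v := by
  induction k generalizing u v with
  | zero => simp
  | succ k ih =>
    rw [pow_succ]
    simp only [Module.End.mul_apply]
    rw [ih (w u) (w v), hw]

lemma pow_eigen {n : ℕ} (w : (Fin n → ℝ) →ₗ[ℝ] (Fin n → ℝ)) (p : Fin n → ℝ) (l : ℝ)
    (hp : w p = l • p) (k : ℕ) : (w ^ k) p = l ^ k • p := by
  induction k with
  | zero => simp
  | succ k ih =>
    rw [pow_succ, Module.End.mul_apply, hp, _root_.map_smul, ih, smul_smul, pow_succ]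
    rw [mul_comm]

/-- If `w` preserves `B` (signature `(n-1,1)`) with eigenvectors
`p ≠ p'` in `Q̂` of eigenvalues `l, l'` and `|l| < 1`, and a subsequence of normalized
iterates of `x ∈ Q̂` (`x ≠ p`, so `B(x,p) ≠ 0`) converges to `y ∈ Q̂`, then
`||w^{nᵢ}(x)|₁| → ∞`, `|B(w^{nᵢ}·x, p')| → 0`, and `y = p'`. -/
theorem stmt16 (n : ℕ) (B : Matrix (Fin n) (Fin n) ℝ) (hB : B.IsHermitian)
    (hneg : (Finset.univ.filter (fun i => hB.eigenvalues i < 0)).card = 1)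
    (hpos : (Finset.univ.filter (fun i => 0 < hB.eigenvalues i)).card = n - 1)
    (o : Fin n → ℝ) (μ : ℝ) (hμ : μ < 0) (ho : B.mulVec o = μ • o)
    (honorm : o ⬝ᵥ o = 1)
    (w : (Fin n → ℝ) →ₗ[ℝ] (Fin n → ℝ))
    (hw : ∀ u v : Fin n → ℝ, (w u) ⬝ᵥ B.mulVec (w v) = u ⬝ᵥ B.mulVec v)
    (p p' : Fin n → ℝ) (l l' : ℝ)
    (hpQ : p ⬝ᵥ B.mulVec p = 0) (hp1 : p ⬝ᵥ o = 1)
    (hp'Q : p' ⬝ᵥ B.mulVec p' = 0) (hp'1 : p' ⬝ᵥ o = 1)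
    (hpp' : p ≠ p')
    (hp : w p = l • p) (hp' : w p' = l' • p')
    (hl : |l| < 1)
    (x : Fin n → ℝ) (hxQ : x ⬝ᵥ B.mulVec x = 0) (hx1 : x ⬝ᵥ o = 1) (hxp : x ≠ p)
    (ni : ℕ → ℕ) (hni : StrictMono ni)
    (y : Fin n → ℝ) (hyQ : y ⬝ᵥ B.mulVec y = 0) (hy1 : y ⬝ᵥ o = 1)
    (hconv : Filter.Tendsto
      (fun i : ℕ => (((w ^ (ni i)) x) ⬝ᵥ o)⁻¹ • ((w ^ (ni i)) x))
      Filter.atTop (nhds y)) :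
    Filter.Tendsto (fun i : ℕ => |((w ^ (ni i)) x) ⬝ᵥ o|) Filter.atTop Filter.atTop ∧
    Filter.Tendsto
      (fun i : ℕ => |((((w ^ (ni i)) x) ⬝ᵥ o)⁻¹ • ((w ^ (ni i)) x)) ⬝ᵥ B.mulVec p'|)
      Filter.atTop (nhds 0) ∧
    y = p' := by
  have hBxp : x ⬝ᵥ B.mulVec p ≠ 0 := fun h =>
    hxp (iso_eq hB hneg hpos o μ hμ ho honorm x p hxQ hx1 hpQ hp1 h)
  have hBpp' : p ⬝ᵥ B.mulVec p' ≠ 0 := fun h =>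
    hpp' (iso_eq hB hneg hpos o μ hμ ho honorm p p' hpQ hp1 hp'Q hp'1 h)
  have hll' : l * l' = 1 := by
    have h := hw p p'
    rw [hp, hp', smul_dotProduct, mulVec_smul, dotProduct_smul] at h
    rw [smul_smul, smul_eq_mul] at h
    exact mul_right_cancel₀ hBpp' (by rw [h, one_mul])
  have hl0 : l ≠ 0 := fun h => by simp [h] at hll'
  have habs : 0 < |l| := abs_pos.mpr hl0
  have keyp : ∀ k : ℕ, l ^ k * (((w ^ k) x) ⬝ᵥ B.mulVec p) = x ⬝ᵥ B.mulVec p := by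
    intro k
    have h := pow_inv_B w hw k x p
    rw [pow_eigen w p l hp k, mulVec_smul, dotProduct_smul] at h
    simpa using h
  have keyp' : ∀ k : ℕ, ((w ^ k) x) ⬝ᵥ B.mulVec p' = l ^ k * (x ⬝ᵥ B.mulVec p') := by
    intro k
    have h := pow_inv_B w hw k x p'
    rw [pow_eigen w p' l' hp' k, mulVec_smul, dotProduct_smul, smul_eq_mul] at h
    have hlk : l ^ k * l' ^ k = 1 := by rw [← mul_pow, hll', one_pow]
    calc ((w ^ k) x) ⬝ᵥ B.mulVec p'
        = (l ^ k * l' ^ k) * (((w ^ k) x) ⬝ᵥ B.mulVec p') := by rw [hlk, one_mul]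
      _ = l ^ k * (l' ^ k * (((w ^ k) x) ⬝ᵥ B.mulVec p')) := by ring
      _ = l ^ k * (x ⬝ᵥ B.mulVec p') := by rw [h]
  have contdot : ∀ v0 : Fin n → ℝ, Continuous fun v : Fin n → ℝ => v ⬝ᵥ v0 := by
    intro v0
    have heq : (fun v : Fin n → ℝ => v ⬝ᵥ v0) = fun v => ∑ i, v i * v0 i := rfl
    rw [heq]
    exact continuous_finset_sum _ fun i _ => (continuous_apply i).mul continuous_const
  have hconv1 : Filter.Tendsto
      (fun i : ℕ => ((((w ^ (ni i)) x) ⬝ᵥ o)⁻¹ • ((w ^ (ni i)) x)) ⬝ᵥ o)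
      Filter.atTop (nhds 1) := by
    have h := (((contdot o).tendsto y).comp hconv)
    rw [hy1] at h
    exact h
  have hcne : ∀ᶠ i in Filter.atTop, ((w ^ (ni i)) x) ⬝ᵥ o ≠ 0 := by
    refine (hconv1.eventually (lt_mem_nhds (show (1:ℝ)/2 < 1 by norm_num))).mono ?_
    intro i hi hzero
    rw [smul_dotProduct, hzero, smul_eq_mul] at hi
    norm_num at hi
  have hconvp : Filter.Tendsto
      (fun i : ℕ => ((((w ^ (ni i)) x) ⬝ᵥ o)⁻¹ • ((w ^ (ni i)) x)) ⬝ᵥ B.mulVec p)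
      Filter.atTop (nhds (y ⬝ᵥ B.mulVec p)) :=
    ((contdot (B.mulVec p)).tendsto y).comp hconv
  set M := |y ⬝ᵥ B.mulVec p| + 1 with hM
  have hMpos : 0 < M := by positivity
  have hbound : ∀ᶠ i in Filter.atTop,
      |((((w ^ (ni i)) x) ⬝ᵥ o)⁻¹ • ((w ^ (ni i)) x)) ⬝ᵥ B.mulVec p| ≤ M := by
    refine (hconvp.eventually (Metric.ball_mem_nhds _ one_pos)).mono ?_
    intro i hi
    rw [Real.dist_eq] at hi
    have h2 := abs_sub_abs_le_abs_sub
      (((((w ^ (ni i)) x) ⬝ᵥ o)⁻¹ • ((w ^ (ni i)) x)) ⬝ᵥ B.mulVec p) (y ⬝ᵥ B.mulVec p)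
    rw [hM]; linarith
  have hineq : ∀ᶠ i in Filter.atTop,
      (|x ⬝ᵥ B.mulVec p| / M) * (|l|⁻¹) ^ (ni i) ≤ |((w ^ (ni i)) x) ⬝ᵥ o| := by
    filter_upwards [hcne, hbound] with i hne hb
    have hcpos : 0 < |((w ^ (ni i)) x) ⬝ᵥ o| := abs_pos.mpr hne
    have hd : ((w ^ (ni i)) x) ⬝ᵥ B.mulVec p = (x ⬝ᵥ B.mulVec p) * (l ^ (ni i))⁻¹ := by
      field_simp
      rw [mul_comm]
      exact keyp (ni i)
    rw [smul_dotProduct, smul_eq_mul, abs_mul, abs_inv, hd, abs_mul, abs_inv, abs_pow,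
      inv_mul_le_iff₀ hcpos] at hb
    rw [div_mul_eq_mul_div, div_le_iff₀ hMpos, inv_pow]
    exact hb
  have hmin : Filter.Tendsto (fun i => (|x ⬝ᵥ B.mulVec p| / M) * (|l|⁻¹) ^ (ni i))
      Filter.atTop Filter.atTop := by
    apply Filter.Tendsto.const_mul_atTop (div_pos (abs_pos.mpr hBxp) hMpos)
    exact (tendsto_pow_atTop_atTop_of_one_lt ((one_lt_inv₀ habs).2 hl)).comp hni.tendsto_atTop
  have conc1 : Filter.Tendsto (fun i : ℕ => |((w ^ (ni i)) x) ⬝ᵥ o|)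
      Filter.atTop Filter.atTop := Filter.tendsto_atTop_mono' _ hineq hmin
  have hub : ∀ i : ℕ,
      |((((w ^ (ni i)) x) ⬝ᵥ o)⁻¹ • ((w ^ (ni i)) x)) ⬝ᵥ B.mulVec p'| ≤
        |x ⬝ᵥ B.mulVec p'| * |((w ^ (ni i)) x) ⬝ᵥ o|⁻¹ := by
    intro i
    rw [smul_dotProduct, smul_eq_mul, keyp' (ni i), abs_mul, abs_mul, abs_inv, abs_pow]
    have h1 : |l| ^ (ni i) ≤ 1 := pow_le_one₀ (abs_nonneg l) (le_of_lt hl)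
    have h2 : (0:ℝ) ≤ |((w ^ (ni i)) x) ⬝ᵥ o|⁻¹ := inv_nonneg.mpr (abs_nonneg _)
    have h3 : (0:ℝ) ≤ |x ⬝ᵥ B.mulVec p'| := abs_nonneg _
    nlinarith [mul_nonneg h2 h3]
  have hrhs0 : Filter.Tendsto (fun i : ℕ => |x ⬝ᵥ B.mulVec p'| * |((w ^ (ni i)) x) ⬝ᵥ o|⁻¹)
      Filter.atTop (nhds 0) := by
    have h := conc1.inv_tendsto_atTop
    have h2 := h.const_mul (|x ⬝ᵥ B.mulVec p'|)
    simpa using h2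
  have conc2 : Filter.Tendsto
      (fun i : ℕ => |((((w ^ (ni i)) x) ⬝ᵥ o)⁻¹ • ((w ^ (ni i)) x)) ⬝ᵥ B.mulVec p'|)
      Filter.atTop (nhds 0) := squeeze_zero (fun i => abs_nonneg _) hub hrhs0
  have hconvp' : Filter.Tendsto
      (fun i : ℕ => ((((w ^ (ni i)) x) ⬝ᵥ o)⁻¹ • ((w ^ (ni i)) x)) ⬝ᵥ B.mulVec p')
      Filter.atTop (nhds (y ⬝ᵥ B.mulVec p')) :=
    ((contdot (B.mulVec p')).tendsto y).comp hconv
  have hzero : Filter.Tendsto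
      (fun i : ℕ => ((((w ^ (ni i)) x) ⬝ᵥ o)⁻¹ • ((w ^ (ni i)) x)) ⬝ᵥ B.mulVec p')
      Filter.atTop (nhds 0) := (tendsto_zero_iff_abs_tendsto_zero _).2 conc2
  have hyBp' : y ⬝ᵥ B.mulVec p' = 0 := tendsto_nhds_unique hconvp' hzero
  exact ⟨conc1, conc2, iso_eq hB hneg hpos o μ hμ ho honorm y p' hyQ hy1 hp'Q hp'1 hyBp'⟩
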